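/- Let n ≥ 2, let H be an n×n real symmetric matrix and t₀ a real number such that |(exp(i t₀ H))₁₂| = 1 (perfect state transfer at time t₀). Then there exist a real number θ, integers 0 ≤ ℓ ≤ m ≤ n with m ≥ 1, an n×n real orthogonal matrix Q, positive even integers r₁ ≥ ⋯ ≥ r_ℓ, positive odd integers r_{ℓ+1} ≥ ⋯ ≥ r_m, real numbers c_{m+1}, …, c_n, and positive reals x₁, …, x_m, such that t₀·H = Qᵀ D Q + θ·I, where D is the diagonal matrix diag(πr₁, …, πr_m, c_{m+1}, …, c_n), the first column of Q is (x₁, …, x_m, 0, …, 0)ᵀ, and the second column of Q is (x₁, …, x_ℓ, −x_{ℓ+1}, …, −x_m, 0, …, 0)ᵀ. -/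

import Mathlib

open Matrix Finset

lemma initseg {n : ℕ} (f : Fin n → ℕ) (hf : Monotone f) (t : ℕ) (i : Fin n) :
    f i ≤ t ↔ (i : ℕ) < (Finset.univ.filter (fun j => f j ≤ t)).card := by
  constructor
  · intro h
    have hsub : Finset.Iic i ⊆ Finset.univ.filter (fun j => f j ≤ t) := by
      intro j hj
      simp only [Finset.mem_Iic] at hj
      simp only [Finset.mem_filter, Finset.mem_univ, true_and]
      exact le_trans (hf hj) h
    have := Finset.card_le_card hsub
    rw [Fin.card_Iic] at this
    omega
  · intro h
    by_contra hc
    have hsub : Finset.univ.filter (fun j => f j ≤ t) ⊆ Finset.Iio i := by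
      intro j hj
      simp only [Finset.mem_filter, Finset.mem_univ, true_and] at hj
      simp only [Finset.mem_Iio]
      by_contra hj'
      exact hc (le_trans (hf (le_of_not_gt hj')) hj)
    have := Finset.card_le_card hsub
    rw [Fin.card_Iio] at this
    omega

lemma card_filter_comp_perm {n : ℕ} (σ : Equiv.Perm (Fin n)) (p : Fin n → Prop)
    [DecidablePred p] :
    (Finset.univ.filter (fun i => p (σ i))).card = (Finset.univ.filter p).card := by
  classical
  rw [← Fintype.card_subtype, ← Fintype.card_subtype]
  exact Fintype.card_congr (σ.subtypeEquiv (fun i => Iff.rfl))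

noncomputable abbrev cmap {n : ℕ} (M : Matrix (Fin n) (Fin n) ℝ) : Matrix (Fin n) (Fin n) ℂ :=
  M.map (fun x => (x : ℂ))

lemma cmap_mul {n : ℕ} (M N : Matrix (Fin n) (Fin n) ℝ) : cmap (M * N) = cmap M * cmap N :=
  Matrix.map_mul (f := Complex.ofRealHom)

lemma cmap_conjT {n : ℕ} (M : Matrix (Fin n) (Fin n) ℝ) : (cmap M)ᴴ = cmap Mᵀ := by
  ext i j
  simp [cmap, conjTranspose_apply, Complex.conj_ofReal]

section main
variable {n : ℕ} (A : Matrix (Fin n) (Fin n) ℝ) (hA : A.IsHermitian)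

lemma hVone : (hA.eigenvectorUnitary : Matrix (Fin n) (Fin n) ℝ)
    * (hA.eigenvectorUnitary : Matrix (Fin n) (Fin n) ℝ)ᵀ = 1 := by
  have := (Matrix.mem_unitaryGroup_iff).mp hA.eigenvectorUnitary.2
  simpa [Matrix.star_eq_conjTranspose] using this

lemma hVone' : (hA.eigenvectorUnitary : Matrix (Fin n) (Fin n) ℝ)ᵀ
    * (hA.eigenvectorUnitary : Matrix (Fin n) (Fin n) ℝ) = 1 := by
  have := (Matrix.mem_unitaryGroup_iff').mp hA.eigenvectorUnitary.2
  simpa [Matrix.star_eq_conjTranspose] using this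

lemma hVspec : A = (hA.eigenvectorUnitary : Matrix (Fin n) (Fin n) ℝ)
    * diagonal hA.eigenvalues * (hA.eigenvectorUnitary : Matrix (Fin n) (Fin n) ℝ)ᵀ := by
  have := hA.spectral_theorem
  simpa [Matrix.star_eq_conjTranspose] using this

lemma expform :
    NormedSpace.exp (Complex.I • A.map (fun x => (x:ℂ)))
      = (cmap (hA.eigenvectorUnitary : Matrix (Fin n) (Fin n) ℝ))
        * diagonal (fun r => Complex.exp (Complex.I * hA.eigenvalues r))
        * (cmap (hA.eigenvectorUnitary : Matrix (Fin n) (Fin n) ℝ))ᴴ := by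
  classical
  set V : Matrix (Fin n) (Fin n) ℝ := (hA.eigenvectorUnitary : Matrix (Fin n) (Fin n) ℝ) with hV
  have hV1 : V * Vᵀ = 1 := hVone A hA
  have hV2 : Vᵀ * V = 1 := hVone' A hA
  have hspec : A = V * diagonal hA.eigenvalues * Vᵀ := hVspec A hA
  have hC1 : cmap V * (cmap V)ᴴ = 1 := by
    rw [cmap_conjT, ← cmap_mul, hV1]; simp [cmap]
  have hC2 : (cmap V)ᴴ * cmap V = 1 := by
    rw [cmap_conjT, ← cmap_mul, hV2]; simp [cmap]
  have hUnit : IsUnit (cmap V) := ⟨⟨cmap V, (cmap V)ᴴ, hC1, hC2⟩, rfl⟩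
  have hInv : (cmap V)⁻¹ = (cmap V)ᴴ := Matrix.inv_eq_right_inv hC1
  have hdiagmap : cmap (diagonal hA.eigenvalues) = diagonal (fun r => (hA.eigenvalues r : ℂ)) := by
    have : ((0:ℝ) : ℂ) = 0 := by norm_num
    simpa [cmap, Function.comp] using Matrix.diagonal_map (f := fun x : ℝ => (x:ℂ)) this
  have hAc : Complex.I • A.map (fun x => (x:ℂ))
      = cmap V * diagonal (fun r => Complex.I * hA.eigenvalues r) * (cmap V)ᴴ := by
    rw [cmap_conjT]
    have : A.map (fun x => (x:ℂ)) = cmap V * diagonal (fun r => (hA.eigenvalues r : ℂ)) * cmap Vᵀ := by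
      rw [← hdiagmap, ← cmap_mul, ← cmap_mul, ← hspec]
    rw [this, ← smul_mul_assoc, ← mul_smul_comm]
    congr 2
    ext i j
    by_cases h : i = j <;> simp [h]
  rw [hAc, ← hInv, Matrix.exp_conj _ _ hUnit, Matrix.exp_diagonal, hInv]
  congr 2
  rw [Pi.exp_def]
  funext r
  rw [Complex.exp_eq_exp_ℂ]

end main

/-- Proposition (spectral decomposition under PST): if `|(exp(i t₀ H))₁₂| = 1` for a real
symmetric `H`, then `t₀ H = Qᵀ D Q + θ I` where `D` is diagonal with the first `ℓ`
diagonal entries positive even multiples of `π` (in decreasing order), the next `m - ℓ`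
entries positive odd multiples of `π` (in decreasing order), the remaining entries
arbitrary reals, and the first two columns of `Q` are
`(x₁, …, x_m, 0, …, 0)ᵀ` and `(x₁, …, x_ℓ, -x_{ℓ+1}, …, -x_m, 0, …, 0)ᵀ` with `xᵢ > 0`. -/
theorem stmt6 {n : ℕ} (hn : 2 ≤ n) (H : Matrix (Fin n) (Fin n) ℝ) (hH : H.IsSymm)
    (t₀ : ℝ)
    (hPST : ‖
       ((NormedSpace.exp (Complex.I • (t₀ : ℂ) • H.map (fun x => (x : ℂ))))
         ⟨0, by omega⟩ ⟨1, by omega⟩)‖ = 1) :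
    ∃ (θ : ℝ) (ℓ m : ℕ), ℓ ≤ m ∧ 1 ≤ m ∧ m ≤ n ∧
      ∃ (Q : Matrix (Fin n) (Fin n) ℝ) (d : Fin n → ℝ) (x : Fin n → ℝ),
        Qᵀ * Q = 1 ∧
        t₀ • H = Qᵀ * Matrix.diagonal d * Q + θ • (1 : Matrix (Fin n) (Fin n) ℝ) ∧
        (∀ i : Fin n, (i : ℕ) < ℓ →
          ∃ k : ℕ, 0 < k ∧ Even k ∧ d i = Real.pi * k) ∧
        (∀ i : Fin n, ℓ ≤ (i : ℕ) → (i : ℕ) < m →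
          ∃ k : ℕ, 0 < k ∧ Odd k ∧ d i = Real.pi * k) ∧
        (∀ i j : Fin n, i ≤ j → (j : ℕ) < ℓ → d j ≤ d i) ∧
        (∀ i j : Fin n, ℓ ≤ (i : ℕ) → i ≤ j → (j : ℕ) < m → d j ≤ d i) ∧
        (∀ i : Fin n, (i : ℕ) < m → 0 < x i) ∧
        (∀ i : Fin n, Q i ⟨0, by omega⟩ = if (i : ℕ) < m then x i else 0) ∧
        (∀ i : Fin n, Q i ⟨1, by omega⟩ =
          if (i : ℕ) < ℓ then x i else if (i : ℕ) < m then -x i else 0) := by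
  classical
  set e0 : Fin n := ⟨0, by omega⟩ with he0
  set e1 : Fin n := ⟨1, by omega⟩ with he1
  have h01 : e0 ≠ e1 := by simp [he0, he1, Fin.ext_iff]
  set A : Matrix (Fin n) (Fin n) ℝ := t₀ • H with hAdef
  have hHsymm : ∀ i j, H j i = H i j := fun i j => congrFun (congrFun hH i) j
  have hA : A.IsHermitian := by
    rw [Matrix.IsHermitian]
    ext i j
    simp only [conjTranspose_apply, hAdef, Matrix.smul_apply, star_trivial, smul_eq_mul]
    rw [hHsymm i j]
  have hmapeq : Complex.I • (t₀:ℂ) • H.map (fun x => (x:ℂ))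
      = Complex.I • A.map (fun x => (x:ℂ)) := by
    congr 1
    ext i j
    simp [hAdef]
  rw [hmapeq] at hPST
  set V : Matrix (Fin n) (Fin n) ℝ := (hA.eigenvectorUnitary : Matrix (Fin n) (Fin n) ℝ) with hVdef
  set lam : Fin n → ℝ := hA.eigenvalues with hlam
  have hV1 : V * Vᵀ = 1 := hVone A hA
  have hV2 : Vᵀ * V = 1 := hVone' A hA
  have hspec : A = V * diagonal lam * Vᵀ := hVspec A hA
  set U := NormedSpace.exp (Complex.I • A.map (fun x => (x:ℂ))) with hUdef
  have hexp : U = cmap V * diagonal (fun r => Complex.exp (Complex.I * lam r)) * (cmap V)ᴴ :=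
    expform A hA
  have hC1 : cmap V * (cmap V)ᴴ = 1 := by
    rw [cmap_conjT, ← cmap_mul, hV1]; simp [cmap]
  have hC2 : (cmap V)ᴴ * cmap V = 1 := by
    rw [cmap_conjT, ← cmap_mul, hV2]; simp [cmap]
  -- U is unitary
  have hUU : U * Uᴴ = 1 := by
    rw [hexp]
    rw [conjTranspose_mul, conjTranspose_mul, conjTranspose_conjTranspose,
      diagonal_conjTranspose]
    simp only [mul_assoc]
    rw [← mul_assoc ((cmap V)ᴴ) (cmap V), hC2, one_mul,
      ← mul_assoc (diagonal _), diagonal_mul_diagonal]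
    have hone : (fun r => Complex.exp (Complex.I * lam r) *
        (star fun r => Complex.exp (Complex.I * lam r)) r) = fun _ => (1:ℂ) := by
      funext r
      simp only [Pi.star_apply, Complex.star_def, ← Complex.exp_conj]
      rw [← Complex.exp_add]
      simp [Complex.ext_iff]
    rw [hone, diagonal_one, one_mul, hC1]
  -- row e0 of U vanishes off e1
  have hrow : ∀ j : Fin n, j ≠ e1 → U e0 j = 0 := by
    have hsum : ∑ j, Complex.normSq (U e0 j) = 1 := by
      have h00 := congrArg (fun M => M e0 e0) hUU
      simp only [Matrix.mul_apply, conjTranspose_apply, Matrix.one_apply_eq] at h00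
      have : ∀ j, U e0 j * star (U e0 j) = (Complex.normSq (U e0 j) : ℂ) := by
        intro j; rw [Complex.star_def, Complex.mul_conj]
      rw [Finset.sum_congr rfl (fun j _ => this j)] at h00
      exact_mod_cast by push_cast at h00 ⊢; exact_mod_cast h00
    have h1 : Complex.normSq (U e0 e1) = 1 := by
      rw [← Complex.sq_norm, hPST]; norm_num
    have hrest : ∑ j ∈ Finset.univ.erase e1, Complex.normSq (U e0 j) = 0 := by
      have h2 : Complex.normSq (U e0 e1)
          + ∑ j ∈ Finset.univ.erase e1, Complex.normSq (U e0 j) = 1 := by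
        rw [← hsum]
        exact Finset.add_sum_erase Finset.univ (fun j => Complex.normSq (U e0 j))
          (Finset.mem_univ e1)
      rw [h1] at h2
      linarith
    intro j hj
    have hmem : j ∈ Finset.univ.erase e1 := Finset.mem_erase.mpr ⟨hj, Finset.mem_univ j⟩
    have := (Finset.sum_eq_zero_iff_of_nonneg
      (fun j _ => Complex.normSq_nonneg (U e0 j))).mp hrest j hmem
    exact Complex.normSq_eq_zero.mp this
  set γ : ℂ := U e0 e1 with hγdef
  have hγabs : ‖γ‖ = 1 := hPST
  have hγne : γ ≠ 0 := by
    intro h; rw [h] at hγabs; simp at hγabs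
  set θ₀ : ℝ := γ.arg with hθ₀
  have hγ : γ = Complex.exp (θ₀ * Complex.I) := by
    conv_lhs => rw [← Complex.norm_mul_exp_arg_mul_I γ]
    rw [hγabs]; simp [hθ₀]
  -- key relation
  have hrel : ∀ r, γ * (V e1 r : ℂ) = Complex.exp (Complex.I * lam r) * (V e0 r : ℂ) := by
    intro r
    have hUV : U * cmap V = cmap V * diagonal (fun r => Complex.exp (Complex.I * lam r)) := by
      rw [hexp, mul_assoc, hC2, mul_one]
    have := congrArg (fun M => M e0 r) hUV
    simp only [Matrix.mul_apply, Matrix.mul_diagonal] at this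
    rw [Finset.sum_eq_single e1 (fun j _ hj => by rw [hrow j hj, zero_mul])
      (fun h => absurd (Finset.mem_univ e1) h)] at this
    rw [← hγdef] at this
    rw [Finset.sum_eq_single r (fun j _ hj => by
        rw [diagonal_apply_ne _ hj, mul_zero])
      (fun h => absurd (Finset.mem_univ r) h)] at this
    rw [diagonal_apply_eq] at this
    exact this.trans (mul_comm _ _)
  -- per-eigenvector structure on the support
  have hsupp : ∀ r : Fin n, V e0 r ≠ 0 →
      ∃ k : ℤ, lam r = θ₀ + Real.pi * k ∧
        ((Even k ∧ V e1 r = V e0 r) ∨ (¬ Even k ∧ V e1 r = - V e0 r)) := by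
    intro r hr
    have hc : (V e0 r : ℂ) ≠ 0 := by exact_mod_cast hr
    have habs : |V e1 r| = |V e0 r| := by
      have h := congrArg norm (hrel r)
      rw [norm_mul, norm_mul, hγabs, one_mul, Complex.norm_real, Complex.norm_real,
        mul_comm Complex.I ((lam r : ℝ) : ℂ), Complex.norm_exp_ofReal_mul_I, one_mul] at h
      exact h
    rcases abs_eq_abs.mp habs with h | h
    · -- even case
      have hγe : γ = Complex.exp (Complex.I * lam r) := by
        have h2 := hrel r
        rw [h] at h2
        exact mul_right_cancel₀ hc h2
      have h1 : Complex.exp (Complex.I * ((lam r : ℂ) - θ₀)) = 1 := by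
        rw [show Complex.I * ((lam r : ℂ) - θ₀)
            = Complex.I * lam r - (θ₀ : ℂ) * Complex.I by ring, Complex.exp_sub,
          ← hγe, hγ, div_self]
        rw [← hγ]; exact hγne
      obtain ⟨kk, hkk⟩ := Complex.exp_eq_one_iff.mp h1
      have h2 : ((lam r : ℂ) - θ₀) = (kk : ℂ) * (2 * Real.pi) := by
        apply mul_left_cancel₀ Complex.I_ne_zero
        rw [hkk]; ring
      have h3 : lam r - θ₀ = kk * (2 * Real.pi) := by exact_mod_cast h2
      refine ⟨2 * kk, by push_cast; linarith, Or.inl ⟨even_two_mul kk, h⟩⟩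
    · -- odd case
      have hexp_eq : Complex.exp (Complex.I * lam r) = -γ := by
        have h2 := hrel r
        rw [h] at h2
        push_cast at h2
        have h3 : (-γ) * (V e0 r : ℂ) = Complex.exp (Complex.I * lam r) * (V e0 r : ℂ) := by
          linear_combination h2
        exact (mul_right_cancel₀ hc h3).symm
      have h1 : Complex.exp (Complex.I * ((lam r : ℂ) - θ₀ - Real.pi)) = 1 := by
        rw [show Complex.I * ((lam r : ℂ) - θ₀ - Real.pi)
            = Complex.I * lam r - (θ₀ : ℂ) * Complex.I - (Real.pi : ℂ) * Complex.I by ring,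
          Complex.exp_sub, Complex.exp_sub, hexp_eq, ← hγ, Complex.exp_pi_mul_I]
        rw [neg_div, div_self hγne]
        norm_num
      obtain ⟨kk, hkk⟩ := Complex.exp_eq_one_iff.mp h1
      have h2 : ((lam r : ℂ) - θ₀ - Real.pi) = (kk : ℂ) * (2 * Real.pi) := by
        apply mul_left_cancel₀ Complex.I_ne_zero
        rw [hkk]; ring
      have h3 : lam r - θ₀ - Real.pi = kk * (2 * Real.pi) := by exact_mod_cast h2
      refine ⟨2 * kk + 1, by push_cast; linarith, Or.inr ⟨by simp [Int.even_add_one, parity_simps], h⟩⟩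
  -- choose the integers
  set k : Fin n → ℤ := fun r => if h : V e0 r ≠ 0 then (hsupp r h).choose else 0 with hkdef
  have hk : ∀ r, V e0 r ≠ 0 → (lam r = θ₀ + Real.pi * k r ∧
      ((Even (k r) ∧ V e1 r = V e0 r) ∨ (¬ Even (k r) ∧ V e1 r = - V e0 r))) := by
    intro r h
    simp only [hkdef, dif_pos h]
    exact (hsupp r h).choose_spec
  set N : ℕ := Finset.univ.sup (fun r => (1 - k r).toNat) with hNdef
  have hkpos : ∀ r : Fin n, (1:ℤ) ≤ k r + 2 * N := by
    intro r
    have h1 : (1 - k r).toNat ≤ N := by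
      rw [hNdef]
      exact Finset.le_sup (f := fun r => (1 - k r).toNat) (Finset.mem_univ r)
    have h2 : (1 - k r : ℤ) ≤ ((1 - k r).toNat : ℤ) := Int.self_le_toNat _
    omega
  set θ : ℝ := θ₀ - Real.pi * (2 * N) with hθdef
  -- classes and sorting
  set c : Fin n → ℕ := fun r => if V e0 r = 0 then 2 else if Even (k r) then 0 else 1 with hcdef
  have hcsupp : ∀ r, c r ≤ 1 ↔ V e0 r ≠ 0 := by
    intro r
    simp only [hcdef]
    by_cases h : V e0 r = 0
    · simp [h]
    · rw [if_neg h]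
      constructor
      · intro _; exact h
      · intro _; split <;> omega
  set key : Fin n → ℕ ×ₗ ℝ := fun r => toLex (c r, - lam r) with hkeydef
  set σ : Equiv.Perm (Fin n) := Tuple.sort key with hσdef
  have hmono : Monotone (key ∘ σ) := Tuple.monotone_sort key
  have hcmono : Monotone (fun i => c (σ i)) := by
    intro i j hij
    have h := hmono hij
    simp only [Function.comp_apply, hkeydef] at h
    rcases Prod.Lex.le_iff.mp h with h' | h'
    · exact le_of_lt h'
    · exact le_of_eq h'.1
  set ℓ : ℕ := (Finset.univ.filter (fun r => c r = 0)).card with hℓdef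
  set m : ℕ := (Finset.univ.filter (fun r => c r ≤ 1)).card with hmdef
  have hℓiff : ∀ i : Fin n, c (σ i) = 0 ↔ (i : ℕ) < ℓ := by
    intro i
    have h := initseg (fun i => c (σ i)) hcmono 0 i
    have hcard : (Finset.univ.filter (fun j => c (σ j) ≤ 0)).card
        = (Finset.univ.filter (fun r => c r ≤ 0)).card :=
      card_filter_comp_perm σ (fun r => c r ≤ 0)
    rw [hcard] at h
    have hfe : (Finset.univ.filter (fun r => c r ≤ 0)) = (Finset.univ.filter (fun r => c r = 0)) :=
      Finset.filter_congr (fun r _ => by omega)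
    rw [hfe] at h
    rw [← h, Nat.le_zero]
  have hmiff : ∀ i : Fin n, c (σ i) ≤ 1 ↔ (i : ℕ) < m := by
    intro i
    have h := initseg (fun i => c (σ i)) hcmono 1 i
    have hcard : (Finset.univ.filter (fun j => c (σ j) ≤ 1)).card
        = (Finset.univ.filter (fun r => c r ≤ 1)).card :=
      card_filter_comp_perm σ (fun r => c r ≤ 1)
    rw [hcard] at h
    exact h
  -- bounds
  have hℓm : ℓ ≤ m := by
    rw [hℓdef, hmdef]
    apply Finset.card_le_card
    intro r hr
    simp only [Finset.mem_filter, Finset.mem_univ, true_and] at hr ⊢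
    omega
  have hmn : m ≤ n := by
    rw [hmdef]
    have h := Finset.card_filter_le (Finset.univ : Finset (Fin n)) (fun r => c r ≤ 1)
    simpa using h
  have hm1 : 1 ≤ m := by
    have hsupp_ne : ∃ r, V e0 r ≠ 0 := by
      by_contra hcon
      push_neg at hcon
      have h := congrArg (fun M => M e0 e0) hV1
      simp only [Matrix.mul_apply, transpose_apply, Matrix.one_apply_eq] at h
      rw [Finset.sum_eq_zero (fun r _ => by rw [hcon r, zero_mul])] at h
      norm_num at h
    obtain ⟨r, hr⟩ := hsupp_ne
    have hmem : r ∈ Finset.univ.filter (fun r => c r ≤ 1) := by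
      simp only [Finset.mem_filter, Finset.mem_univ, true_and]
      exact (hcsupp r).mpr hr
    rw [hmdef]
    exact Finset.card_pos.mpr ⟨r, hmem⟩
  -- sign normalization and final data
  set ε : Fin n → ℝ := fun r => if V e0 r < 0 then -1 else 1 with hεdef
  have hε2 : ∀ r, ε r * ε r = 1 := by
    intro r; simp only [hεdef]; split <;> norm_num
  have hεpos : ∀ r, V e0 r ≠ 0 → 0 < ε r * V e0 r := by
    intro r h
    rcases lt_or_gt_of_ne h with h' | h'
    · simp only [hεdef, if_pos h']; nlinarith
    · simp only [hεdef, if_neg (not_lt.mpr (le_of_lt h'))]; nlinarith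
  set Q : Matrix (Fin n) (Fin n) ℝ := Matrix.of (fun i j => ε (σ i) * V j (σ i)) with hQdef
  set d : Fin n → ℝ := fun i => lam (σ i) - θ with hddef
  set x : Fin n → ℝ := fun i => ε (σ i) * V e0 (σ i) with hxdef
  -- facts about classes along σ
  have hclass0 : ∀ i : Fin n, (i : ℕ) < ℓ → V e0 (σ i) ≠ 0 ∧ Even (k (σ i)) := by
    intro i hi
    have hc0 : c (σ i) = 0 := (hℓiff i).mpr hi
    have hne : V e0 (σ i) ≠ 0 := (hcsupp (σ i)).mp (by omega)
    refine ⟨hne, ?_⟩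
    by_contra hev
    simp only [hcdef, if_neg hne, if_neg hev] at hc0
    omega
  have hclass1 : ∀ i : Fin n, ℓ ≤ (i : ℕ) → (i : ℕ) < m →
      V e0 (σ i) ≠ 0 ∧ ¬ Even (k (σ i)) := by
    intro i hi1 hi2
    have hc1 : c (σ i) ≤ 1 := (hmiff i).mpr hi2
    have hc0 : c (σ i) ≠ 0 := fun h => by have := (hℓiff i).mp h; omega
    have hne : V e0 (σ i) ≠ 0 := (hcsupp (σ i)).mp hc1
    refine ⟨hne, ?_⟩
    intro hev
    simp only [hcdef, if_neg hne, if_pos hev] at hc0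
    exact hc0 rfl
  have hclass2 : ∀ i : Fin n, m ≤ (i : ℕ) → V e0 (σ i) = 0 := by
    intro i hi
    by_contra hne
    have := (hmiff i).mp ((hcsupp (σ i)).mpr hne)
    omega
  have htoNat : ∀ r : Fin n, (((k r + 2 * N).toNat : ℤ)) = k r + 2 * N := by
    intro r
    exact Int.toNat_of_nonneg (by have := hkpos r; omega)
  have hdval : ∀ i : Fin n, V e0 (σ i) ≠ 0 →
      d i = Real.pi * ((k (σ i) + 2 * N).toNat : ℕ) := by
    intro i hne
    have hlami := (hk (σ i) hne).1
    simp only [hddef, hθdef]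
    rw [hlami]
    have h2 : (((k (σ i) + 2 * N).toNat : ℕ) : ℝ) = (k (σ i) : ℝ) + 2 * N := by
      exact_mod_cast congrArg (fun z : ℤ => (z : ℝ)) (htoNat (σ i))
    rw [h2]
    push_cast
    ring
  refine ⟨θ, ℓ, m, hℓm, hm1, hmn, Q, d, x, ?_, ?_, ?_, ?_, ?_, ?_, ?_, ?_, ?_⟩
  · -- QᵀQ = 1
    ext j p
    have hsum : ∑ i, Q i j * Q i p = ∑ r, V j r * V p r := by
      rw [← Equiv.sum_comp σ (fun r => V j r * V p r)]
      apply Finset.sum_congr rfl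
      intro i _
      simp only [hQdef, Matrix.of_apply]
      rw [show ε (σ i) * V j (σ i) * (ε (σ i) * V p (σ i))
          = ε (σ i) * ε (σ i) * (V j (σ i) * V p (σ i)) by ring, hε2, one_mul]
    rw [Matrix.mul_apply]
    simp only [transpose_apply]
    rw [hsum]
    have h1 := congrArg (fun M => M j p) hV1
    simp only [Matrix.mul_apply, transpose_apply] at h1
    exact h1
  · -- the decomposition
    rw [hspec]
    ext j p
    simp only [Matrix.add_apply, Matrix.smul_apply, smul_eq_mul]
    have hL : (V * diagonal lam * Vᵀ) j p = ∑ r, V j r * lam r * V p r := by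
      rw [Matrix.mul_apply]
      apply Finset.sum_congr rfl
      intro r _
      rw [Matrix.mul_diagonal, transpose_apply]
    have hR : (Qᵀ * diagonal d * Q) j p = ∑ i, Q i j * d i * Q i p := by
      rw [Matrix.mul_apply]
      apply Finset.sum_congr rfl
      intro i _
      rw [Matrix.mul_diagonal, transpose_apply]
    rw [hL, hR]
    have hsum2 : ∑ i, Q i j * d i * Q i p
        = ∑ i, (V j (σ i) * lam (σ i) * V p (σ i) - θ * (V j (σ i) * V p (σ i))) := by
      apply Finset.sum_congr rfl
      intro i _
      simp only [hQdef, Matrix.of_apply, hddef]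
      linear_combination (V j (σ i) * V p (σ i) * (lam (σ i) - θ)) * hε2 (σ i)
    rw [hsum2, Finset.sum_sub_distrib, ← Finset.mul_sum,
      Equiv.sum_comp σ (fun r => V j r * lam r * V p r),
      Equiv.sum_comp σ (fun r => V j r * V p r)]
    have h1 := congrArg (fun M => M j p) hV1
    simp only [Matrix.mul_apply, transpose_apply] at h1
    rw [h1]
    ring
  · -- even multiples of π
    intro i hi
    obtain ⟨hne, heven⟩ := hclass0 i hi
    refine ⟨(k (σ i) + 2 * N).toNat, ?_, ?_, hdval i hne⟩
    · have := hkpos (σ i); omega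
    · have h2 : Even (((k (σ i) + 2 * N).toNat : ℤ)) := by
        rw [htoNat (σ i)]
        exact heven.add (even_two_mul (N : ℤ))
      exact_mod_cast h2
  · -- odd multiples of π
    intro i hi1 hi2
    obtain ⟨hne, hodd⟩ := hclass1 i hi1 hi2
    refine ⟨(k (σ i) + 2 * N).toNat, ?_, ?_, hdval i hne⟩
    · have := hkpos (σ i); omega
    · have h2 : Odd (((k (σ i) + 2 * N).toNat : ℤ)) := by
        rw [htoNat (σ i)]
        exact (Int.not_even_iff_odd.mp hodd).add_even (even_two_mul (N : ℤ))
      exact_mod_cast h2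
  · -- decreasing on even block
    intro i j hij hj
    have hi : (i : ℕ) < ℓ := lt_of_le_of_lt hij hj
    have hci : c (σ i) = 0 := (hℓiff i).mpr hi
    have hcj : c (σ j) = 0 := (hℓiff j).mpr hj
    have h := hmono hij
    simp only [Function.comp_apply, hkeydef] at h
    rcases Prod.Lex.le_iff.mp h with h' | h'
    · simp only [ofLex_toLex] at h'
      omega
    · have h2 : - lam (σ i) ≤ - lam (σ j) := h'.2
      simp only [hddef]
      linarith
  · -- decreasing on odd block
    intro i j hi hij hj
    have hj' : ℓ ≤ (j : ℕ) := le_trans hi hij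
    have hjm : (j : ℕ) < m := hj
    have him : (i : ℕ) < m := lt_of_le_of_lt hij hj
    obtain ⟨hnei, hoddi⟩ := hclass1 i hi him
    obtain ⟨hnej, hoddj⟩ := hclass1 j hj' hjm
    have hci : c (σ i) = 1 := by simp only [hcdef, if_neg hnei, if_neg hoddi]
    have hcj : c (σ j) = 1 := by simp only [hcdef, if_neg hnej, if_neg hoddj]
    have h := hmono hij
    simp only [Function.comp_apply, hkeydef] at h
    rcases Prod.Lex.le_iff.mp h with h' | h'
    · simp only [ofLex_toLex] at h'
      omega
    · have h2 : - lam (σ i) ≤ - lam (σ j) := h'.2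
      simp only [hddef]
      linarith
  · -- positivity of x
    intro i hi
    have hne : V e0 (σ i) ≠ 0 := (hcsupp (σ i)).mp ((hmiff i).mpr hi)
    exact hεpos (σ i) hne
  · -- first column of Q
    intro i
    show Q i e0 = _
    split_ifs with h
    · rfl
    · have h0 : V e0 (σ i) = 0 := hclass2 i (le_of_not_gt h)
      simp only [hQdef, Matrix.of_apply, h0, mul_zero]
  · -- second column of Q
    intro i
    show Q i e1 = _
    split_ifs with h1 h2
    · obtain ⟨hne, heven⟩ := hclass0 i h1
      rcases (hk (σ i) hne).2 with ⟨_, heq⟩ | ⟨hodd, _⟩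
      · simp only [hQdef, Matrix.of_apply, heq, hxdef]
      · exact absurd heven hodd
    · obtain ⟨hne, hodd⟩ := hclass1 i (le_of_not_gt h1) h2
      rcases (hk (σ i) hne).2 with ⟨heven, _⟩ | ⟨_, heq⟩
      · exact absurd heven hodd
      · simp only [hQdef, Matrix.of_apply, heq, hxdef]
        ring
    · have h0 : V e0 (σ i) = 0 := hclass2 i (le_of_not_gt h2)
      have h2' : V e1 (σ i) = 0 := by
        have h := hrel (σ i)
        rw [h0] at h
        push_cast at h
        rw [mul_zero] at h
        rcases mul_eq_zero.mp h with h' | h'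
        · exact absurd h' hγne
        · exact_mod_cast h'
      simp only [hQdef, Matrix.of_apply, h2', mul_zero]
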